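/- The region 𝒮 = { x = (S,Q,E,A,I,H,R) in the nonnegative orthant of ℝ⁷ : S ≤ S° and Q ≤ Q° } is positively invariant for the COVID-19 system: every solution x with x(0) ∈ 𝒮 satisfies x(t) ∈ 𝒮 for all t ≥ 0. -/

import Mathlib

open scoped BigOperators
open Set Filter

/-- The vector field of the deterministic SQEAIHR COVID-19 model.
State: `x = (S, Q, E, A, I, H, R)` indexed by `Fin 7`. -/
noncomputable def covidF (Λ b q lam μ σ εA γA dA εI γI dI γH dH θ p β₁ β₂ : ℝ)
    (x : Fin 7 → ℝ) : Fin 7 → ℝ :=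
  ![Λ - (β₁ - β₂ * x 4 / (b + x 4)) * x 0 * (x 4 + θ * x 3) + lam * x 1 - (μ + q) * x 0,
    q * x 0 - (μ + lam) * x 1,
    (β₁ - β₂ * x 4 / (b + x 4)) * x 0 * (x 4 + θ * x 3) - (μ + σ) * x 2,
    (1 - p) * σ * x 2 - (μ + εA + γA + dA) * x 3,
    σ * p * x 2 - (μ + εI + γI + dI) * x 4,
    εI * x 4 + εA * x 3 - (μ + dH + γH) * x 5,
    γH * x 5 + γI * x 4 + γA * x 3 - μ * x 6]

/-- A solution of the system on `[0, ∞)`: a function differentiable (within `[0,∞)`) whose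
derivative equals the vector field at every `t ≥ 0`. -/
def IsSolution (F : (Fin 7 → ℝ) → Fin 7 → ℝ) (x : ℝ → Fin 7 → ℝ) : Prop :=
  ∀ t : ℝ, 0 ≤ t → HasDerivWithinAt x (F (x t)) (Set.Ici (0 : ℝ)) t

/-- the region
`𝒮 = { x ≥ 0 : S ≤ S° and Q ≤ Q° }` is positively invariant, where
`S° = (Λ/μ)(μ+λ)/(μ+q+λ)` and `Q° = (Λ/μ)q/(μ+q+λ)`. -/
lemma np_hasDerivAt (a : ℝ) : HasDerivAt (fun s : ℝ => (min s 0)^2) (2 * min a 0) a := by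
  rcases lt_trichotomy a 0 with h | h | h
  · have : HasDerivAt (fun s : ℝ => s^2) (2*a) a := by
      simpa using (hasDerivAt_pow 2 a)
    have he : (fun s : ℝ => s^2) =ᶠ[nhds a] (fun s : ℝ => (min s 0)^2) := by
      filter_upwards [Iio_mem_nhds h] with s hs
      rw [min_eq_left (le_of_lt hs)]
    simpa [min_eq_left h.le] using this.congr_of_eventuallyEq he.symm
  · subst h
    rw [hasDerivAt_iff_tendsto_slope]
    simp only [min_self, ne_eq]
    have hb : ∀ s : ℝ, s ≠ 0 → ‖slope (fun s : ℝ => (min s 0)^2) 0 s‖ ≤ ‖s‖ := by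
      intro s hs
      have hsl : slope (fun s : ℝ => (min s 0)^2) 0 s = (min s 0)^2 / s := by
        rw [slope_def_field]; simp
      rw [hsl]
      rcases le_or_gt s 0 with h1 | h1
      · rw [min_eq_left h1]
        have hs0 : s < 0 := lt_of_le_of_ne h1 hs
        rw [norm_div]
        rw [div_le_iff₀ (norm_pos_iff.2 hs)]
        have : ‖s^2‖ = ‖s‖*‖s‖ := by rw [sq]; exact norm_mul s s
        rw [this]
      · rw [min_eq_right h1.le]; simp
    have hn : Tendsto (fun s : ℝ => ‖s‖) (nhdsWithin 0 {(0:ℝ)}ᶜ) (nhds 0) := by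
      have : Tendsto (fun s : ℝ => ‖s‖) (nhds 0) (nhds 0) := by
        simpa using continuous_norm.tendsto (0:ℝ)
      exact this.mono_left nhdsWithin_le_nhds
    have hev : ∀ᶠ s in nhdsWithin (0:ℝ) {(0:ℝ)}ᶜ,
        ‖slope (fun s : ℝ => (min s 0)^2) 0 s‖ ≤ ‖s‖ := by
      filter_upwards [self_mem_nhdsWithin] with s hs using hb s hs
    simpa using squeeze_zero_norm' hev hn
  · have he : (fun s : ℝ => (0:ℝ)) =ᶠ[nhds a] (fun s : ℝ => (min s 0)^2) := by
      filter_upwards [Ioi_mem_nhds h] with s hs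
      rw [min_eq_right (le_of_lt hs)]; norm_num
    simpa [min_eq_right h.le] using (hasDerivAt_const a (0:ℝ)).congr_of_eventuallyEq he.symm


lemma eq_zero_of_mul_exp {a e : ℝ} (h : a * e ≤ 0) (ha : 0 ≤ a) (he : 0 < e) : a = 0 := by
  nlinarith

lemma nonneg_of_sq_min_eq_zero {g : ℝ} (h : (min g 0)^2 = 0) : 0 ≤ g := by
  have h1 : min g 0 = 0 := sq_eq_zero_iff.mp h
  exact min_eq_right_iff.mp h1

lemma term_le {g d C N m : ℝ} (hm : m = min g 0) (hC : 0 ≤ C) (hN : 0 ≤ N)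
    (h : g < 0 → -d ≤ C * N) : 2 * m * d ≤ -(2 * C * N * m) := by
  rcases le_or_gt 0 g with h1 | h1
  · rw [hm, min_eq_right h1]; simp
  · rw [hm, min_eq_left h1.le]
    have h2 := h h1
    nlinarith [mul_le_mul_of_nonneg_left h2 (le_of_lt (by linarith : (0:ℝ) < -g))]

lemma Tlow {βe B D X : ℝ} (h0 : 0 ≤ βe) (hB : βe ≤ B) (hD : 0 ≤ D) (hX : -D ≤ X) :
    -(βe * X) ≤ B * D := by nlinarith

lemma Tup {βe B Y X : ℝ} (h0 : 0 ≤ βe) (hB : βe ≤ B) (hY : 0 ≤ Y) (hX : X ≤ Y) :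
    βe * X ≤ B * Y := by nlinarith

lemma sq_sum_le (m0 m1 m2 m3 m4 m5 m6 m7 m8 : ℝ) :
    (-m0 - m1 - m2 - m3 - m4 - m5 - m6 - m7 - m8) *
      (-m0 - m1 - m2 - m3 - m4 - m5 - m6 - m7 - m8)
      ≤ 9 * (m0^2 + m1^2 + m2^2 + m3^2 + m4^2 + m5^2 + m6^2 + m7^2 + m8^2) := by
  linarith only [sq_nonneg (m0-m1), sq_nonneg (m0-m2), sq_nonneg (m0-m3), sq_nonneg (m0-m4),
    sq_nonneg (m0-m5), sq_nonneg (m0-m6), sq_nonneg (m0-m7), sq_nonneg (m0-m8),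
    sq_nonneg (m1-m2), sq_nonneg (m1-m3), sq_nonneg (m1-m4), sq_nonneg (m1-m5),
    sq_nonneg (m1-m6), sq_nonneg (m1-m7), sq_nonneg (m1-m8),
    sq_nonneg (m2-m3), sq_nonneg (m2-m4), sq_nonneg (m2-m5), sq_nonneg (m2-m6),
    sq_nonneg (m2-m7), sq_nonneg (m2-m8),
    sq_nonneg (m3-m4), sq_nonneg (m3-m5), sq_nonneg (m3-m6), sq_nonneg (m3-m7),
    sq_nonneg (m3-m8),
    sq_nonneg (m4-m5), sq_nonneg (m4-m6), sq_nonneg (m4-m7), sq_nonneg (m4-m8),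
    sq_nonneg (m5-m6), sq_nonneg (m5-m7), sq_nonneg (m5-m8),
    sq_nonneg (m6-m7), sq_nonneg (m6-m8), sq_nonneg (m7-m8)]

set_option maxHeartbeats 2000000 in
lemma covid_core (Λ b q lam μ σ εA γA dA εI γI dI γH dH θ p β₁ β₂ Sst Qst M : ℝ)
    (hΛ : 0 < Λ) (hb : 0 < b) (hq : 0 < q) (hlam : 0 < lam) (hμ : 0 < μ)
    (hσ : 0 < σ) (hεA : 0 < εA) (hγA : 0 < γA) (hdA : 0 < dA)
    (hεI : 0 < εI) (hγI : 0 < γI) (hdI : 0 < dI) (hγH : 0 < γH) (hdH : 0 < dH)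
    (hθ : θ ∈ Set.Ioo (0 : ℝ) 1) (hp : p ∈ Set.Ioo (0 : ℝ) 1)
    (hβ₂ : 0 < β₂) (hβ : β₂ ≤ β₁)
    (hid1 : Λ + lam * Qst = (μ + q) * Sst) (hid2 : q * Sst = (μ + lam) * Qst)
    (hM : 1 ≤ M) (y : Fin 7 → ℝ) (hy : ∀ i, |y i| ≤ M) (hI4 : b / 2 ≤ b + y 4) :
    2 * min (y 0) 0 * (covidF Λ b q lam μ σ εA γA dA εI γI dI γH dH θ p β₁ β₂ y 0)
    + 2 * min (y 1) 0 * (covidF Λ b q lam μ σ εA γA dA εI γI dI γH dH θ p β₁ β₂ y 1)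
    + 2 * min (y 2) 0 * (covidF Λ b q lam μ σ εA γA dA εI γI dI γH dH θ p β₁ β₂ y 2)
    + 2 * min (y 3) 0 * (covidF Λ b q lam μ σ εA γA dA εI γI dI γH dH θ p β₁ β₂ y 3)
    + 2 * min (y 4) 0 * (covidF Λ b q lam μ σ εA γA dA εI γI dI γH dH θ p β₁ β₂ y 4)
    + 2 * min (y 5) 0 * (covidF Λ b q lam μ σ εA γA dA εI γI dI γH dH θ p β₁ β₂ y 5)
    + 2 * min (y 6) 0 * (covidF Λ b q lam μ σ εA γA dA εI γI dI γH dH θ p β₁ β₂ y 6)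
    + 2 * min (Sst - y 0) 0 * (-(covidF Λ b q lam μ σ εA γA dA εI γI dI γH dH θ p β₁ β₂ y 0))
    + 2 * min (Qst - y 1) 0 * (-(covidF Λ b q lam μ σ εA γA dA εI γI dI γH dH θ p β₁ β₂ y 1))
    ≤ 18 * (2 * (β₁ + 2 * β₂ * M / b) * M + lam + q + σ + εI + εA + γH + γI + γA + μ)
      * ((min (y 0) 0)^2 + (min (y 1) 0)^2 + (min (y 2) 0)^2 + (min (y 3) 0)^2
        + (min (y 4) 0)^2 + (min (y 5) 0)^2 + (min (y 6) 0)^2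
        + (min (Sst - y 0) 0)^2 + (min (Qst - y 1) 0)^2) := by
  obtain ⟨hθ0, hθ1⟩ := hθ
  obtain ⟨hp0, hp1⟩ := hp
  have hM0 : (0:ℝ) ≤ M := by linarith
  have hβ₁ : 0 < β₁ := lt_of_lt_of_le hβ₂ hβ
  set B : ℝ := β₁ + 2 * β₂ * M / b with hB_def
  have hB0 : 0 < B := by
    rw [hB_def]
    have h1 : 0 < 2 * β₂ * M / b := by positivity
    linarith only [h1, hβ₁]
  set C : ℝ := 2 * B * M + lam + q + σ + εI + εA + γH + γI + γA + μ with hC_def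
  have h2BM : (0:ℝ) ≤ 2 * B * M := by positivity
  have hC0 : (0:ℝ) ≤ C := by
    rw [hC_def]
    linarith only [h2BM, hlam, hq, hσ, hεI, hεA, hγH, hγI, hγA, hμ]
  set βe : ℝ := β₁ - β₂ * y 4 / (b + y 4) with hβe_def
  have hbpos : (0:ℝ) < b + y 4 := by linarith only [hb, hI4]
  have hbe0 : 0 ≤ βe := by
    rw [hβe_def, sub_nonneg]
    rcases le_or_gt (y 4) 0 with h1 | h1
    · have h2 : β₂ * y 4 ≤ 0 := mul_nonpos_of_nonneg_of_nonpos hβ₂.le h1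
      have h3 : β₂ * y 4 / (b + y 4) ≤ 0 := div_nonpos_of_nonpos_of_nonneg h2 hbpos.le
      linarith only [h3, hβ₁]
    · rw [div_le_iff₀ hbpos]
      have h2 : β₂ * y 4 ≤ β₂ * (b + y 4) := mul_le_mul_of_nonneg_left (by linarith only [hb]) hβ₂.le
      have h3 : β₂ * (b + y 4) ≤ β₁ * (b + y 4) := mul_le_mul_of_nonneg_right hβ hbpos.le
      linarith only [h2, h3]
  have hbeB : βe ≤ B := by
    have habs : |β₂ * y 4 / (b + y 4)| ≤ β₂ * M / (b / 2) := by
      rw [abs_div]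
      refine div_le_div₀ (by positivity) ?_ (by positivity) ?_
      · rw [abs_mul, abs_of_pos hβ₂]
        exact mul_le_mul_of_nonneg_left (hy 4) hβ₂.le
      · rw [abs_of_pos hbpos]; exact hI4
    have heq : β₂ * M / (b / 2) = 2 * β₂ * M / b := by
      field_simp
    rw [heq] at habs
    have h1 := (abs_le.mp habs).1
    rw [hβe_def, hB_def]
    linarith only [h1]
  -- the m's
  set m0 := min (y 0) 0 with hm0
  set m1 := min (y 1) 0 with hm1
  set m2 := min (y 2) 0 with hm2
  set m3 := min (y 3) 0 with hm3
  set m4 := min (y 4) 0 with hm4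
  set m5 := min (y 5) 0 with hm5
  set m6 := min (y 6) 0 with hm6
  set m7 := min (Sst - y 0) 0 with hm7
  set m8 := min (Qst - y 1) 0 with hm8
  have hm0n : m0 ≤ 0 := min_le_right _ _
  have hm1n : m1 ≤ 0 := min_le_right _ _
  have hm2n : m2 ≤ 0 := min_le_right _ _
  have hm3n : m3 ≤ 0 := min_le_right _ _
  have hm4n : m4 ≤ 0 := min_le_right _ _
  have hm5n : m5 ≤ 0 := min_le_right _ _
  have hm6n : m6 ≤ 0 := min_le_right _ _
  have hm7n : m7 ≤ 0 := min_le_right _ _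
  have hm8n : m8 ≤ 0 := min_le_right _ _
  have hm0y : m0 ≤ y 0 := min_le_left _ _
  have hm1y : m1 ≤ y 1 := min_le_left _ _
  have hm2y : m2 ≤ y 2 := min_le_left _ _
  have hm3y : m3 ≤ y 3 := min_le_left _ _
  have hm4y : m4 ≤ y 4 := min_le_left _ _
  have hm5y : m5 ≤ y 5 := min_le_left _ _
  have hm6y : m6 ≤ y 6 := min_le_left _ _
  have hm7y : m7 ≤ Sst - y 0 := min_le_left _ _
  have hm8y : m8 ≤ Qst - y 1 := min_le_left _ _
  set N : ℝ := -m0 - m1 - m2 - m3 - m4 - m5 - m6 - m7 - m8 with hN_def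
  have hN0 : 0 ≤ N := by
    rw [hN_def]; linarith only [hm0n, hm1n, hm2n, hm3n, hm4n, hm5n, hm6n, hm7n, hm8n]
  have hn0N : -m0 ≤ N := by
    rw [hN_def]; linarith only [hm1n, hm2n, hm3n, hm4n, hm5n, hm6n, hm7n, hm8n]
  have hn1N : -m1 ≤ N := by
    rw [hN_def]; linarith only [hm0n, hm2n, hm3n, hm4n, hm5n, hm6n, hm7n, hm8n]
  have hn2N : -m2 ≤ N := by
    rw [hN_def]; linarith only [hm0n, hm1n, hm3n, hm4n, hm5n, hm6n, hm7n, hm8n]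
  have hn3N : -m3 ≤ N := by
    rw [hN_def]; linarith only [hm0n, hm1n, hm2n, hm4n, hm5n, hm6n, hm7n, hm8n]
  have hn4N : -m4 ≤ N := by
    rw [hN_def]; linarith only [hm0n, hm1n, hm2n, hm3n, hm5n, hm6n, hm7n, hm8n]
  have hn5N : -m5 ≤ N := by
    rw [hN_def]; linarith only [hm0n, hm1n, hm2n, hm3n, hm4n, hm6n, hm7n, hm8n]
  have hn6N : -m6 ≤ N := by
    rw [hN_def]; linarith only [hm0n, hm1n, hm2n, hm3n, hm4n, hm5n, hm7n, hm8n]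
  have hn7N : -m7 ≤ N := by
    rw [hN_def]; linarith only [hm0n, hm1n, hm2n, hm3n, hm4n, hm5n, hm6n, hm8n]
  have hn8N : -m8 ≤ N := by
    rw [hN_def]; linarith only [hm0n, hm1n, hm2n, hm3n, hm4n, hm5n, hm6n, hm7n]
  -- positive parts
  set a0 := max (y 0) 0 with ha0_def
  set a3 := max (y 3) 0 with ha3_def
  set a4 := max (y 4) 0 with ha4_def
  have ha0 : 0 ≤ a0 := le_max_right _ _
  have ha3 : 0 ≤ a3 := le_max_right _ _
  have ha4 : 0 ≤ a4 := le_max_right _ _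
  have ha0M : a0 ≤ M := max_le (le_trans (le_abs_self _) (hy 0)) hM0
  have ha3M : a3 ≤ M := max_le (le_trans (le_abs_self _) (hy 3)) hM0
  have ha4M : a4 ≤ M := max_le (le_trans (le_abs_self _) (hy 4)) hM0
  have hd0 : a0 + m0 = y 0 := by rw [ha0_def, hm0]; simpa using max_add_min (y 0) 0
  have hd3 : a3 + m3 = y 3 := by rw [ha3_def, hm3]; simpa using max_add_min (y 3) 0
  have hd4 : a4 + m4 = y 4 := by rw [ha4_def, hm4]; simpa using max_add_min (y 4) 0
  have hθa3M : θ * a3 ≤ M := by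
    have h1 : θ * a3 ≤ 1 * a3 := mul_le_mul_of_nonneg_right hθ1.le ha3
    linarith only [h1, ha3M]
  have p1 : (0:ℝ) ≤ a0 * a4 := mul_nonneg ha0 ha4
  have p2 : M * m4 ≤ a0 * m4 := mul_le_mul_of_nonpos_right ha0M hm4n
  have p3 : (0:ℝ) ≤ θ * (a0 * a3) := mul_nonneg hθ0.le (mul_nonneg ha0 ha3)
  have p4 : M * m3 ≤ θ * (a0 * m3) := by
    have h1 : M * m3 ≤ a0 * m3 := mul_le_mul_of_nonpos_right ha0M hm3n
    have h2 : a0 * m3 ≤ θ * (a0 * m3) :=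
      le_mul_of_le_one_left (mul_nonpos_of_nonneg_of_nonpos ha0 hm3n) hθ1.le
    linarith only [h1, h2]
  have p5 : M * m0 ≤ a4 * m0 := mul_le_mul_of_nonpos_right ha4M hm0n
  have p6 : (0:ℝ) ≤ m0 * m4 := mul_nonneg_of_nonpos_of_nonpos hm0n hm4n
  have p7 : M * m0 ≤ (θ * a3) * m0 := mul_le_mul_of_nonpos_right hθa3M hm0n
  have p8 : (0:ℝ) ≤ θ * (m0 * m3) :=
    mul_nonneg hθ0.le (mul_nonneg_of_nonpos_of_nonpos hm0n hm3n)
  have hstar : -(2*M*(-m0) + M*(-m4) + M*(-m3)) ≤ y 0 * (y 4 + θ * y 3) := by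
    rw [← hd0, ← hd3, ← hd4]
    linarith only [p1, p2, p3, p4, p5, p6, p7, p8]
  have hD0 : (0:ℝ) ≤ 2*M*(-m0) + M*(-m4) + M*(-m3) := by
    have h1 := mul_nonneg hM0 (neg_nonneg.2 hm0n)
    have h2 := mul_nonneg hM0 (neg_nonneg.2 hm4n)
    have h3 := mul_nonneg hM0 (neg_nonneg.2 hm3n)
    linarith only [h1, h2, h3]
  have hT_low := Tlow hbe0 hbeB hD0 hstar
  have hT_up : y 0 < 0 → βe * (y 0 * (y 4 + θ * y 3)) ≤ B * (2*M*(-m0)) := by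
    intro h0
    have hm0e : m0 = y 0 := by rw [hm0, min_eq_left h0.le]
    have hy3 := abs_le.mp (hy 3)
    have hy4 := abs_le.mp (hy 4)
    have u1 : θ * (-M) ≤ θ * y 3 := mul_le_mul_of_nonneg_left hy3.1 hθ0.le
    have u2 : θ * M ≤ 1 * M := mul_le_mul_of_nonneg_right hθ1.le hM0
    have h1 : -(2*M) ≤ y 4 + θ * y 3 := by linarith only [u1, u2, hy4.1]
    have h2 := mul_le_mul_of_nonpos_left h1 h0.le
    have hX : y 0 * (y 4 + θ * y 3) ≤ 2*M*(-m0) := by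
      rw [hm0e]; linarith only [h2]
    exact Tup hbe0 hbeB (by have := mul_nonneg hM0 (neg_nonneg.2 hm0n); linarith only [this]) hX
  -- component formulas
  have e0 : covidF Λ b q lam μ σ εA γA dA εI γI dI γH dH θ p β₁ β₂ y 0
      = Λ - βe * y 0 * (y 4 + θ * y 3) + lam * y 1 - (μ + q) * y 0 := by rw [hβe_def]; rfl
  have e1 : covidF Λ b q lam μ σ εA γA dA εI γI dI γH dH θ p β₁ β₂ y 1
      = q * y 0 - (μ + lam) * y 1 := rfl
  have e2 : covidF Λ b q lam μ σ εA γA dA εI γI dI γH dH θ p β₁ β₂ y 2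
      = βe * y 0 * (y 4 + θ * y 3) - (μ + σ) * y 2 := by rw [hβe_def]; rfl
  have e3 : covidF Λ b q lam μ σ εA γA dA εI γI dI γH dH θ p β₁ β₂ y 3
      = (1 - p) * σ * y 2 - (μ + εA + γA + dA) * y 3 := rfl
  have e4 : covidF Λ b q lam μ σ εA γA dA εI γI dI γH dH θ p β₁ β₂ y 4
      = σ * p * y 2 - (μ + εI + γI + dI) * y 4 := rfl
  have e5 : covidF Λ b q lam μ σ εA γA dA εI γI dI γH dH θ p β₁ β₂ y 5
      = εI * y 4 + εA * y 3 - (μ + dH + γH) * y 5 := rfl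
  have e6 : covidF Λ b q lam μ σ εA γA dA εI γI dI γH dH θ p β₁ β₂ y 6
      = γH * y 5 + γI * y 4 + γA * y 3 - μ * y 6 := rfl
  -- hoisted helpers
  have s034 : (-m0) + (-m3) + (-m4) ≤ N := by
    rw [hN_def]; linarith only [hm1n, hm2n, hm5n, hm6n, hm7n, hm8n]
  have sBMN : 2*B*M*((-m0) + (-m3) + (-m4)) ≤ 2*B*M*N := mul_le_mul_of_nonneg_left s034 h2BM
  have sBM3 : 0 ≤ B*M*(-m3) := mul_nonneg (mul_nonneg hB0.le hM0) (neg_nonneg.2 hm3n)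
  have sBM4 : 0 ≤ B*M*(-m4) := mul_nonneg (mul_nonneg hB0.le hM0) (neg_nonneg.2 hm4n)
  have sBMC : 2*B*M*N ≤ C*N := mul_le_mul_of_nonneg_right
    (by rw [hC_def]; linarith only [hlam, hq, hσ, hεI, hεA, hγH, hγI, hγA, hμ]) hN0
  have sqC : q*N ≤ C*N := mul_le_mul_of_nonneg_right
    (by rw [hC_def]; linarith only [h2BM, hlam, hσ, hεI, hεA, hγH, hγI, hγA, hμ]) hN0
  -- the nine claims
  have claim0 : y 0 < 0 → -(Λ - βe * y 0 * (y 4 + θ * y 3) + lam * y 1 - (μ + q) * y 0) ≤ C * N := by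
    intro h0
    have hTU := hT_up h0
    have c1 : lam * m1 ≤ lam * y 1 := mul_le_mul_of_nonneg_left hm1y hlam.le
    have c2 : (μ + q) * y 0 ≤ 0 :=
      mul_nonpos_of_nonneg_of_nonpos (by linarith only [hμ, hq]) h0.le
    have s1 : lam*(-m1) ≤ lam*N := mul_le_mul_of_nonneg_left hn1N hlam.le
    have s2 : 2*B*M*(-m0) ≤ 2*B*M*N := mul_le_mul_of_nonneg_left hn0N h2BM
    have s3 : (2*B*M + lam) * N ≤ C * N := mul_le_mul_of_nonneg_right
      (by rw [hC_def]; linarith only [hq, hσ, hεI, hεA, hγH, hγI, hγA, hμ]) hN0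
    linarith only [hTU, c1, c2, s1, s2, s3, hΛ]
  have claim1 : y 1 < 0 → -(q * y 0 - (μ + lam) * y 1) ≤ C * N := by
    intro h1
    have c1 : q * m0 ≤ q * y 0 := mul_le_mul_of_nonneg_left hm0y hq.le
    have s1 : q*(-m0) ≤ q*N := mul_le_mul_of_nonneg_left hn0N hq.le
    have c2 : (μ + lam) * y 1 ≤ 0 :=
      mul_nonpos_of_nonneg_of_nonpos (by linarith only [hμ, hlam]) h1.le
    linarith only [c1, s1, c2, sqC]
  have claim2 : y 2 < 0 → -(βe * y 0 * (y 4 + θ * y 3) - (μ + σ) * y 2) ≤ C * N := by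
    intro h2
    have c1 : (μ + σ) * y 2 ≤ 0 :=
      mul_nonpos_of_nonneg_of_nonpos (by linarith only [hμ, hσ]) h2.le
    linarith only [hT_low, c1, sBMN, sBM3, sBM4, sBMC]
  have claim3 : y 3 < 0 → -((1 - p) * σ * y 2 - (μ + εA + γA + dA) * y 3) ≤ C * N := by
    intro h3
    have c1 : (μ + εA + γA + dA) * y 3 ≤ 0 :=
      mul_nonpos_of_nonneg_of_nonpos (by linarith only [hμ, hεA, hγA, hdA]) h3.le
    have hps : (0:ℝ) ≤ (1 - p) * σ := mul_nonneg (by linarith only [hp1]) hσ.le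
    have c2 : (1-p)*σ*m2 ≤ (1-p)*σ*y 2 := mul_le_mul_of_nonneg_left hm2y hps
    have s1 : (1-p)*σ*(-m2) ≤ (1-p)*σ*N := mul_le_mul_of_nonneg_left hn2N hps
    have hpσ : (0:ℝ) ≤ p * σ := mul_nonneg hp0.le hσ.le
    have s2 : (1-p)*σ*N ≤ C*N := mul_le_mul_of_nonneg_right
      (by rw [hC_def]; linarith only [h2BM, hlam, hq, hεI, hεA, hγH, hγI, hγA, hμ, hpσ]) hN0
    linarith only [c1, c2, s1, s2]
  have claim4 : y 4 < 0 → -(σ * p * y 2 - (μ + εI + γI + dI) * y 4) ≤ C * N := by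
    intro h4
    have c1 : (μ + εI + γI + dI) * y 4 ≤ 0 :=
      mul_nonpos_of_nonneg_of_nonpos (by linarith only [hμ, hεI, hγI, hdI]) h4.le
    have hps : (0:ℝ) ≤ σ * p := mul_nonneg hσ.le hp0.le
    have c2 : σ*p*m2 ≤ σ*p*y 2 := mul_le_mul_of_nonneg_left hm2y hps
    have s1 : σ*p*(-m2) ≤ σ*p*N := mul_le_mul_of_nonneg_left hn2N hps
    have hpσ : (0:ℝ) ≤ (1-p) * σ := mul_nonneg (by linarith only [hp1]) hσ.le
    have s2 : σ*p*N ≤ C*N := mul_le_mul_of_nonneg_right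
      (by rw [hC_def]; linarith only [h2BM, hlam, hq, hεI, hεA, hγH, hγI, hγA, hμ, hpσ]) hN0
    linarith only [c1, c2, s1, s2]
  have claim5 : y 5 < 0 → -(εI * y 4 + εA * y 3 - (μ + dH + γH) * y 5) ≤ C * N := by
    intro h5
    have c1 : (μ + dH + γH) * y 5 ≤ 0 :=
      mul_nonpos_of_nonneg_of_nonpos (by linarith only [hμ, hdH, hγH]) h5.le
    have c2 : εI*m4 ≤ εI*y 4 := mul_le_mul_of_nonneg_left hm4y hεI.le
    have c3 : εA*m3 ≤ εA*y 3 := mul_le_mul_of_nonneg_left hm3y hεA.le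
    have s1 : εI*(-m4) ≤ εI*N := mul_le_mul_of_nonneg_left hn4N hεI.le
    have s2 : εA*(-m3) ≤ εA*N := mul_le_mul_of_nonneg_left hn3N hεA.le
    have s3 : (εI + εA)*N ≤ C*N := mul_le_mul_of_nonneg_right
      (by rw [hC_def]; linarith only [h2BM, hlam, hq, hσ, hγH, hγI, hγA, hμ]) hN0
    linarith only [c1, c2, c3, s1, s2, s3]
  have claim6 : y 6 < 0 → -(γH * y 5 + γI * y 4 + γA * y 3 - μ * y 6) ≤ C * N := by
    intro h6
    have c1 : μ * y 6 ≤ 0 := mul_nonpos_of_nonneg_of_nonpos hμ.le h6.le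
    have c2 : γH*m5 ≤ γH*y 5 := mul_le_mul_of_nonneg_left hm5y hγH.le
    have c3 : γI*m4 ≤ γI*y 4 := mul_le_mul_of_nonneg_left hm4y hγI.le
    have c4 : γA*m3 ≤ γA*y 3 := mul_le_mul_of_nonneg_left hm3y hγA.le
    have s1 : γH*(-m5) ≤ γH*N := mul_le_mul_of_nonneg_left hn5N hγH.le
    have s2 : γI*(-m4) ≤ γI*N := mul_le_mul_of_nonneg_left hn4N hγI.le
    have s3 : γA*(-m3) ≤ γA*N := mul_le_mul_of_nonneg_left hn3N hγA.le
    have s4 : (γH + γI + γA)*N ≤ C*N := mul_le_mul_of_nonneg_right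
      (by rw [hC_def]; linarith only [h2BM, hlam, hq, hσ, hεI, hεA, hμ]) hN0
    linarith only [c1, c2, c3, c4, s1, s2, s3, s4]
  have claim7 : Sst - y 0 < 0 →
      -(-(Λ - βe * y 0 * (y 4 + θ * y 3) + lam * y 1 - (μ + q) * y 0)) ≤ C * N := by
    intro h7
    rw [neg_neg]
    have hm7e : m7 = Sst - y 0 := by rw [hm7, min_eq_left h7.le]
    have c2 : (μ+q)*y 0 = (μ+q)*Sst - (μ+q)*m7 := by
      rw [show y 0 = Sst - m7 by linarith only [hm7e]]; ring
    have c3 : (μ+q)*m7 ≤ 0 :=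
      mul_nonpos_of_nonneg_of_nonpos (by linarith only [hμ, hq]) hm7n
    have c4 : lam * y 1 ≤ lam * (Qst - m8) :=
      mul_le_mul_of_nonneg_left (by linarith only [hm8y]) hlam.le
    have s1 : lam*(-m8) ≤ lam*N := mul_le_mul_of_nonneg_left hn8N hlam.le
    have sC1 : (2*B*M + lam)*N ≤ C*N := mul_le_mul_of_nonneg_right
      (by rw [hC_def]; linarith only [hq, hσ, hεI, hεA, hγH, hγI, hγA, hμ]) hN0
    linarith only [hT_low, c2, c3, c4, s1, sBMN, sBM3, sBM4, sC1, hid1]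
  have claim8 : Qst - y 1 < 0 → -(-(q * y 0 - (μ + lam) * y 1)) ≤ C * N := by
    intro h8
    rw [neg_neg]
    have hm8e : m8 = Qst - y 1 := by rw [hm8, min_eq_left h8.le]
    have c1 : q*y 0 ≤ q*(Sst - m7) :=
      mul_le_mul_of_nonneg_left (by linarith only [hm7y]) hq.le
    have s1 : q*(-m7) ≤ q*N := mul_le_mul_of_nonneg_left hn7N hq.le
    have c3 : (μ+lam)*y 1 = (μ+lam)*Qst - (μ+lam)*m8 := by
      rw [show y 1 = Qst - m8 by linarith only [hm8e]]; ring
    have c4 : (μ+lam)*m8 ≤ 0 :=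
      mul_nonpos_of_nonneg_of_nonpos (by linarith only [hμ, hlam]) hm8n
    linarith only [c1, s1, c3, c4, hid2, sqC]
  -- keys
  have key0 := term_le hm0 hC0 hN0 claim0
  have key1 := term_le hm1 hC0 hN0 claim1
  have key2 := term_le hm2 hC0 hN0 claim2
  have key3 := term_le hm3 hC0 hN0 claim3
  have key4 := term_le hm4 hC0 hN0 claim4
  have key5 := term_le hm5 hC0 hN0 claim5
  have key6 := term_le hm6 hC0 hN0 claim6
  have key7 := term_le hm7 hC0 hN0 claim7
  have key8 := term_le hm8 hC0 hN0 claim8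
  have hsumkeys : -(2*C*N*m0) + -(2*C*N*m1) + -(2*C*N*m2) + -(2*C*N*m3) + -(2*C*N*m4)
      + -(2*C*N*m5) + -(2*C*N*m6) + -(2*C*N*m7) + -(2*C*N*m8) = 2*C*(N*N) := by
    rw [hN_def]; ring
  have hsq : N*N ≤ 9*(m0^2+m1^2+m2^2+m3^2+m4^2+m5^2+m6^2+m7^2+m8^2) := by
    rw [hN_def]; exact sq_sum_le m0 m1 m2 m3 m4 m5 m6 m7 m8
  have hfin : 2*C*(N*N) ≤ 18*C*(m0^2+m1^2+m2^2+m3^2+m4^2+m5^2+m6^2+m7^2+m8^2) := by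
    have h := mul_le_mul_of_nonneg_left hsq hC0
    linarith only [h]
  rw [e0, e1, e2, e3, e4, e5, e6]
  linarith only [key0, key1, key2, key3, key4, key5, key6, key7, key8, hsumkeys, hfin]


set_option maxHeartbeats 2000000 in
theorem covid_region_S_positively_invariant
    (Λ b q lam μ σ εA γA dA εI γI dI γH dH θ p β₁ β₂ : ℝ)
    (hΛ : 0 < Λ) (hb : 0 < b) (hq : 0 < q) (hlam : 0 < lam) (hμ : 0 < μ)
    (hσ : 0 < σ) (hεA : 0 < εA) (hγA : 0 < γA) (hdA : 0 < dA)
    (hεI : 0 < εI) (hγI : 0 < γI) (hdI : 0 < dI) (hγH : 0 < γH) (hdH : 0 < dH)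
    (hθ : θ ∈ Set.Ioo (0 : ℝ) 1) (hp : p ∈ Set.Ioo (0 : ℝ) 1)
    (hβ₂ : 0 < β₂) (hβ : β₂ ≤ β₁)
    (x : ℝ → Fin 7 → ℝ)
    (hx : IsSolution (covidF Λ b q lam μ σ εA γA dA εI γI dI γH dH θ p β₁ β₂) x)
    (h0 : (∀ i, 0 ≤ x 0 i) ∧ x 0 0 ≤ Λ / μ * ((μ + lam) / (μ + q + lam)) ∧ x 0 1 ≤ Λ / μ * (q / (μ + q + lam))) :
    ∀ t : ℝ, 0 ≤ t →
      (∀ i, 0 ≤ x t i) ∧ x t 0 ≤ Λ / μ * ((μ + lam) / (μ + q + lam)) ∧ x t 1 ≤ Λ / μ * (q / (μ + q + lam)) := by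
  obtain ⟨h0nn, h0S, h0Q⟩ := h0
  set Sst := Λ / μ * ((μ + lam) / (μ + q + lam)) with hSst_def
  set Qst := Λ / μ * (q / (μ + q + lam)) with hQst_def
  have hμql : (0:ℝ) < μ + q + lam := by linarith
  have hid1 : Λ + lam * Qst = (μ + q) * Sst := by
    rw [hSst_def, hQst_def]; field_simp; ring
  have hid2 : q * Sst = (μ + lam) * Qst := by
    rw [hSst_def, hQst_def]; field_simp
  set R : Set (Fin 7 → ℝ) := {z | (∀ i, 0 ≤ z i) ∧ z 0 ≤ Sst ∧ z 1 ≤ Qst} with hR_def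
  have hRclosed : IsClosed R := by
    have hEq : R = (⋂ i, (fun z : Fin 7 → ℝ => z i) ⁻¹' Ici 0)
        ∩ ((fun z : Fin 7 → ℝ => z 0) ⁻¹' Iic Sst ∩ (fun z : Fin 7 → ℝ => z 1) ⁻¹' Iic Qst) := by
      rw [hR_def]; ext z
      simp only [Set.mem_setOf_eq, Set.mem_inter_iff, Set.mem_iInter, Set.mem_preimage,
        Set.mem_Ici, Set.mem_Iic]
      try tauto
    rw [hEq]
    exact (isClosed_iInter fun i => isClosed_Ici.preimage (continuous_apply i)).inter
      ((isClosed_Iic.preimage (continuous_apply 0)).inter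
        (isClosed_Iic.preimage (continuous_apply 1)))
  -- local invariance step
  have key : ∀ τ : ℝ, 0 ≤ τ → x τ ∈ R → ∃ δ > 0, ∀ u ∈ Icc τ (τ + δ), x u ∈ R := by
    intro τ hτ hxτ
    obtain ⟨hxτnn, hxτS, hxτQ⟩ := hxτ
    have hcont : ContinuousWithinAt x (Ici 0) τ := (hx τ hτ).continuousWithinAt
    set ε : ℝ := min 1 (b/2) with hε_def
    have hε : 0 < ε := lt_min one_pos (by linarith)
    have hball := hcont (Metric.ball_mem_nhds (x τ) hε)
    rw [Filter.mem_map, Metric.mem_nhdsWithin_iff] at hball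
    obtain ⟨δ₀, hδ₀, hsub⟩ := hball
    refine ⟨δ₀/2, by linarith, ?_⟩
    set δ : ℝ := δ₀/2 with hδ_def
    have hδpos : 0 < δ := by rw [hδ_def]; linarith
    set M : ℝ := (∑ j : Fin 7, |x τ j|) + 1 with hM_def
    have hsum0 : 0 ≤ ∑ j : Fin 7, |x τ j| := Finset.sum_nonneg fun j _ => abs_nonneg _
    have hM1 : 1 ≤ M := by rw [hM_def]; linarith
    have hdist : ∀ u ∈ Icc τ (τ + δ), dist (x u) (x τ) < ε := by
      intro u hu
      apply hsub
      constructor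
      · rw [Metric.mem_ball, Real.dist_eq, abs_of_nonneg (by linarith [hu.1] : (0:ℝ) ≤ u - τ)]
        have := hu.2
        rw [hδ_def] at this
        linarith
      · exact le_trans hτ hu.1
    have hyb : ∀ u ∈ Icc τ (τ + δ), ∀ i, |x u i| ≤ M := by
      intro u hu i
      have h1 : dist (x u i) (x τ i) ≤ dist (x u) (x τ) := dist_le_pi_dist _ _ i
      have h2 := hdist u hu
      have h3 : ε ≤ 1 := min_le_left _ _
      have h4 : |x u i - x τ i| ≤ 1 := by rw [← Real.dist_eq]; linarith
      have h5 : |x τ i| ≤ ∑ j : Fin 7, |x τ j| :=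
        Finset.single_le_sum (fun j _ => abs_nonneg (x τ j)) (Finset.mem_univ i)
      have h6 := abs_sub_abs_le_abs_sub (x u i) (x τ i)
      rw [hM_def]; linarith
    have hI4 : ∀ u ∈ Icc τ (τ + δ), b / 2 ≤ b + x u 4 := by
      intro u hu
      have h1 : dist (x u 4) (x τ 4) ≤ dist (x u) (x τ) := dist_le_pi_dist _ _ 4
      have h2 := hdist u hu
      have h3 : ε ≤ b/2 := min_le_right _ _
      have h4 : |x u 4 - x τ 4| ≤ b/2 := by rw [← Real.dist_eq]; linarith
      have h5 : 0 ≤ x τ 4 := hxτnn 4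
      have h6 := (abs_le.mp h4).1
      linarith
    set K : ℝ := 18 * (2 * (β₁ + 2 * β₂ * M / b) * M + lam + q + σ + εI + εA + γH + γI + γA + μ)
      with hK_def
    set v : ℝ → ℝ := fun u => (min (x u 0) 0)^2 + (min (x u 1) 0)^2 + (min (x u 2) 0)^2
      + (min (x u 3) 0)^2 + (min (x u 4) 0)^2 + (min (x u 5) 0)^2 + (min (x u 6) 0)^2
      + (min (Sst - x u 0) 0)^2 + (min (Qst - x u 1) 0)^2 with hv_def
    set w : ℝ → ℝ := fun u => v u * Real.exp (-K * (u - τ)) with hw_def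
    have hxc : ContinuousOn x (Icc τ (τ + δ)) := by
      intro u hu
      exact ((hx u (le_trans hτ hu.1)).continuousWithinAt).mono fun z hz => le_trans hτ hz.1
    have hcoord : ∀ i : Fin 7, ContinuousOn (fun u => x u i) (Icc τ (τ + δ)) :=
      fun i => (continuous_apply i).comp_continuousOn hxc
    have hvc : ContinuousOn v (Icc τ (τ + δ)) := by
      rw [hv_def]
      have hminc : Continuous (fun s : ℝ => (min s 0)^2) :=
        (continuous_id.min continuous_const).pow 2
      exact ((((((((hminc.comp_continuousOn (hcoord 0)).add
        (hminc.comp_continuousOn (hcoord 1))).add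
        (hminc.comp_continuousOn (hcoord 2))).add
        (hminc.comp_continuousOn (hcoord 3))).add
        (hminc.comp_continuousOn (hcoord 4))).add
        (hminc.comp_continuousOn (hcoord 5))).add
        (hminc.comp_continuousOn (hcoord 6))).add
        (hminc.comp_continuousOn (continuousOn_const.sub (hcoord 0)))).add
        (hminc.comp_continuousOn (continuousOn_const.sub (hcoord 1)))
    have hwc : ContinuousOn w (Icc τ (τ + δ)) := by
      rw [hw_def]
      exact hvc.mul ((Real.continuous_exp.comp
        ((continuous_const.mul (continuous_id.sub continuous_const)))).continuousOn)
    have hkey : ∀ t ∈ Ioo τ (τ + δ), ∃ d : ℝ, HasDerivAt w d t ∧ d ≤ 0 := by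
      intro t ht
      have ht0 : 0 < t := lt_of_le_of_lt hτ ht.1
      have hmem : t ∈ Icc τ (τ + δ) := ⟨ht.1.le, ht.2.le⟩
      have hD := (hx t ht0.le).hasDerivAt (Ici_mem_nhds ht0)
      have hDi := hasDerivAt_pi.mp hD
      have t0 := (np_hasDerivAt (x t 0)).comp t (hDi 0)
      have t1 := (np_hasDerivAt (x t 1)).comp t (hDi 1)
      have t2 := (np_hasDerivAt (x t 2)).comp t (hDi 2)
      have t3 := (np_hasDerivAt (x t 3)).comp t (hDi 3)
      have t4 := (np_hasDerivAt (x t 4)).comp t (hDi 4)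
      have t5 := (np_hasDerivAt (x t 5)).comp t (hDi 5)
      have t6 := (np_hasDerivAt (x t 6)).comp t (hDi 6)
      have t7 := (np_hasDerivAt (Sst - x t 0)).comp t ((hDi 0).const_sub Sst)
      have t8 := (np_hasDerivAt (Qst - x t 1)).comp t ((hDi 1).const_sub Qst)
      have hv' : HasDerivAt v
          (2 * min (x t 0) 0 * (covidF Λ b q lam μ σ εA γA dA εI γI dI γH dH θ p β₁ β₂ (x t) 0)
          + 2 * min (x t 1) 0 * (covidF Λ b q lam μ σ εA γA dA εI γI dI γH dH θ p β₁ β₂ (x t) 1)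
          + 2 * min (x t 2) 0 * (covidF Λ b q lam μ σ εA γA dA εI γI dI γH dH θ p β₁ β₂ (x t) 2)
          + 2 * min (x t 3) 0 * (covidF Λ b q lam μ σ εA γA dA εI γI dI γH dH θ p β₁ β₂ (x t) 3)
          + 2 * min (x t 4) 0 * (covidF Λ b q lam μ σ εA γA dA εI γI dI γH dH θ p β₁ β₂ (x t) 4)
          + 2 * min (x t 5) 0 * (covidF Λ b q lam μ σ εA γA dA εI γI dI γH dH θ p β₁ β₂ (x t) 5)
          + 2 * min (x t 6) 0 * (covidF Λ b q lam μ σ εA γA dA εI γI dI γH dH θ p β₁ β₂ (x t) 6)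
          + 2 * min (Sst - x t 0) 0 * (-(covidF Λ b q lam μ σ εA γA dA εI γI dI γH dH θ p β₁ β₂ (x t) 0))
          + 2 * min (Qst - x t 1) 0 * (-(covidF Λ b q lam μ σ εA γA dA εI γI dI γH dH θ p β₁ β₂ (x t) 1))) t := by
        rw [hv_def]
        exact (((((((t0.add t1).add t2).add t3).add t4).add t5).add t6).add t7).add t8
      have hexpD : HasDerivAt (fun u : ℝ => Real.exp (-K * (u - τ)))
          (Real.exp (-K * (t - τ)) * (-K)) t := by
        have hi : HasDerivAt (fun u : ℝ => -K * (u - τ)) (-K) t := by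
          simpa using ((hasDerivAt_id t).sub_const τ).const_mul (-K)
        exact (Real.hasDerivAt_exp _).comp t hi
      have hw' := hv'.mul hexpD
      replace hw' : HasDerivAt w _ t := hw'
      have hcore := covid_core Λ b q lam μ σ εA γA dA εI γI dI γH dH θ p β₁ β₂ Sst Qst M
        hΛ hb hq hlam hμ hσ hεA hγA hdA hεI hγI hdI hγH hdH hθ hp hβ₂ hβ hid1 hid2
        hM1 (x t) (hyb t hmem) (hI4 t hmem)
      have hvt : v t = (min (x t 0) 0)^2 + (min (x t 1) 0)^2 + (min (x t 2) 0)^2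
          + (min (x t 3) 0)^2 + (min (x t 4) 0)^2 + (min (x t 5) 0)^2 + (min (x t 6) 0)^2
          + (min (Sst - x t 0) 0)^2 + (min (Qst - x t 1) 0)^2 := by rw [hv_def]
      have hvt0 : 0 ≤ v t := by rw [hvt]; positivity
      have hKv : (2 * min (x t 0) 0 * (covidF Λ b q lam μ σ εA γA dA εI γI dI γH dH θ p β₁ β₂ (x t) 0)
          + 2 * min (x t 1) 0 * (covidF Λ b q lam μ σ εA γA dA εI γI dI γH dH θ p β₁ β₂ (x t) 1)
          + 2 * min (x t 2) 0 * (covidF Λ b q lam μ σ εA γA dA εI γI dI γH dH θ p β₁ β₂ (x t) 2)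
          + 2 * min (x t 3) 0 * (covidF Λ b q lam μ σ εA γA dA εI γI dI γH dH θ p β₁ β₂ (x t) 3)
          + 2 * min (x t 4) 0 * (covidF Λ b q lam μ σ εA γA dA εI γI dI γH dH θ p β₁ β₂ (x t) 4)
          + 2 * min (x t 5) 0 * (covidF Λ b q lam μ σ εA γA dA εI γI dI γH dH θ p β₁ β₂ (x t) 5)
          + 2 * min (x t 6) 0 * (covidF Λ b q lam μ σ εA γA dA εI γI dI γH dH θ p β₁ β₂ (x t) 6)
          + 2 * min (Sst - x t 0) 0 * (-(covidF Λ b q lam μ σ εA γA dA εI γI dI γH dH θ p β₁ β₂ (x t) 0))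
          + 2 * min (Qst - x t 1) 0 * (-(covidF Λ b q lam μ σ εA γA dA εI γI dI γH dH θ p β₁ β₂ (x t) 1)))
          ≤ K * v t := by
        rw [hvt, hK_def]
        exact hcore
      refine ⟨_, hw', ?_⟩
      have hexp0 : (0:ℝ) < Real.exp (-K * (t - τ)) := Real.exp_pos _
      have hh := mul_le_mul_of_nonneg_right hKv hexp0.le
      linarith only [hh]
    have hanti : AntitoneOn w (Icc τ (τ + δ)) := by
      apply antitoneOn_of_deriv_nonpos (convex_Icc _ _) hwc
      · intro t ht
        rw [interior_Icc] at ht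
        obtain ⟨d, hd, _⟩ := hkey t ht
        exact hd.differentiableAt.differentiableWithinAt
      · intro t ht
        rw [interior_Icc] at ht
        obtain ⟨d, hd, hd0⟩ := hkey t ht
        rw [hd.deriv]
        exact hd0
    have hvτ : v τ = 0 := by
      simp only [hv_def]
      rw [min_eq_right (hxτnn 0), min_eq_right (hxτnn 1), min_eq_right (hxτnn 2),
        min_eq_right (hxτnn 3), min_eq_right (hxτnn 4), min_eq_right (hxτnn 5),
        min_eq_right (hxτnn 6), min_eq_right (sub_nonneg.2 hxτS), min_eq_right (sub_nonneg.2 hxτQ)]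
      norm_num
    have hwτ : w τ = 0 := by
      simp only [hw_def]
      rw [hvτ, zero_mul]
    intro u hu
    have hwu : w u ≤ w τ := hanti (left_mem_Icc.2 (by linarith)) hu hu.1
    have hexp0 : (0:ℝ) < Real.exp (-K * (u - τ)) := Real.exp_pos _
    have hvu0 : 0 ≤ v u := by simp only [hv_def]; positivity
    have hwu' : v u * Real.exp (-K * (u - τ)) ≤ 0 := by
      have : w u = v u * Real.exp (-K * (u - τ)) := by rw [hw_def]
      rw [← this]; rw [hwτ] at hwu; exact hwu
    have hvu : v u = 0 := eq_zero_of_mul_exp hwu' hvu0 hexp0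
    simp only [hv_def] at hvu
    have s0 := sq_nonneg (min (x u 0) 0)
    have s1 := sq_nonneg (min (x u 1) 0)
    have s2 := sq_nonneg (min (x u 2) 0)
    have s3 := sq_nonneg (min (x u 3) 0)
    have s4 := sq_nonneg (min (x u 4) 0)
    have s5 := sq_nonneg (min (x u 5) 0)
    have s6 := sq_nonneg (min (x u 6) 0)
    have s7 := sq_nonneg (min (Sst - x u 0) 0)
    have s8 := sq_nonneg (min (Qst - x u 1) 0)
    have g0 : 0 ≤ x u 0 := nonneg_of_sq_min_eq_zero (by linarith)
    have g1 : 0 ≤ x u 1 := nonneg_of_sq_min_eq_zero (by linarith)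
    have g2 : 0 ≤ x u 2 := nonneg_of_sq_min_eq_zero (by linarith)
    have g3 : 0 ≤ x u 3 := nonneg_of_sq_min_eq_zero (by linarith)
    have g4 : 0 ≤ x u 4 := nonneg_of_sq_min_eq_zero (by linarith)
    have g5 : 0 ≤ x u 5 := nonneg_of_sq_min_eq_zero (by linarith)
    have g6 : 0 ≤ x u 6 := nonneg_of_sq_min_eq_zero (by linarith)
    have g7 : 0 ≤ Sst - x u 0 := nonneg_of_sq_min_eq_zero (by linarith)
    have g8 : 0 ≤ Qst - x u 1 := nonneg_of_sq_min_eq_zero (by linarith)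
    refine ⟨fun i => ?_, by linarith, by linarith⟩
    fin_cases i
    · exact g0
    · exact g1
    · exact g2
    · exact g3
    · exact g4
    · exact g5
    · exact g6
  -- global argument via continuous induction
  intro t ht
  have hIcc : Icc (0:ℝ) t ⊆ {u | x u ∈ R} := by
    apply IsClosed.Icc_subset_of_forall_mem_nhdsWithin
    · have hxc : ContinuousOn x (Icc 0 t) := fun u hu =>
        ((hx u hu.1).continuousWithinAt).mono fun z hz => hz.1
      have hcl := hxc.preimage_isClosed_of_isClosed isClosed_Icc hRclosed
      rw [Set.inter_comm] at hcl
      exact hcl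
    · exact ⟨h0nn, h0S, h0Q⟩
    · intro τ hτ
      obtain ⟨δ, hδ, hloc⟩ := key τ hτ.2.1 hτ.1
      apply Filter.mem_of_superset
        (Ioc_mem_nhdsGT_of_mem (⟨le_refl τ, by linarith⟩ : τ ∈ Ico τ (τ + δ)))
      intro u hu
      exact hloc u ⟨hu.1.le, hu.2⟩
  exact hIcc ⟨ht, le_refl t⟩
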